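/- Every 2-coloring of the symmetric group S₅ on five letters contains at least 90 monochromatic 3-term arithmetic progressions; that is, R(3, S₅, 2) ≥ 90. -/

import Mathlib

open Finset

/-- A 3-term arithmetic progression in a group `G`: a set of three distinct
elements of the form `{a, b*a, b^2*a}` with `a b : G`. -/
def IsThreeAP {G : Type*} [Group G] [DecidableEq G] (s : Finset G) : Prop :=
  s.card = 3 ∧ ∃ a b : G, s = {a, b * a, b ^ 2 * a}

/-- The number of monochromatic 3-term arithmetic progressions of `G` under the
2-coloring `χ : G → {-1, 1}`. -/
noncomputable def monoAPCount (G : Type*) [Group G] [Fintype G] [DecidableEq G]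
    (χ : G → ℤ) : ℕ :=
  Set.ncard {s : Finset G | IsThreeAP s ∧ ∀ x ∈ s, ∀ y ∈ s, χ x = χ y}

/-- `R(3,G,2)`: the minimal number of monochromatic 3-term arithmetic progressions
over all 2-colorings of `G`. -/
noncomputable def RThree (G : Type*) [Group G] [Fintype G] [DecidableEq G] : ℕ :=
  sInf {m : ℕ | ∃ χ : G → ℤ, (∀ g, χ g = 1 ∨ χ g = -1) ∧ m = monoAPCount G χ}

set_option maxRecDepth 40000

abbrev G5 := Equiv.Perm (Fin 5)

namespace APaux

def fS (χ : G5 → ℤ) (b : G5) : ℤ := ∑ a : G5, χ a * χ (b * a)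

lemma card120 : Fintype.card G5 = 120 := by
  simp [Fintype.card_perm]; rfl

variable {χ : G5 → ℤ} (hχ : ∀ g, χ g = 1 ∨ χ g = -1)

include hχ in
lemma sq1 (g : G5) : χ g * χ g = 1 := by rcases hχ g with h | h <;> rw [h] <;> norm_num

lemma fS_shift (χ : G5 → ℤ) (c b : G5) : ∑ a : G5, χ (c * a) * χ (b * (c * a)) = fS χ b := by
  exact Fintype.sum_bijective (fun a => c * a) (Group.mulLeft_bijective c)
    _ _ (fun a => rfl)

lemma fS_inv (χ : G5 → ℤ) (b : G5) : fS χ b⁻¹ = fS χ b := by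
  have h := fS_shift χ b b⁻¹
  simp only [inv_mul_cancel_left] at h
  rw [← h, fS]
  exact Finset.sum_congr rfl fun a _ => mul_comm _ _

include hχ in
lemma fS_le (b : G5) : fS χ b ≤ 120 := by
  calc fS χ b ≤ ∑ _a : G5, (1:ℤ) := by
        apply Finset.sum_le_sum
        intro a _
        rcases hχ a with h | h <;> rcases hχ (b*a) with h' | h' <;> rw [h, h'] <;> norm_num
    _ = 120 := by simp [card120]

include hχ in
lemma fS_ge (b : G5) : -120 ≤ fS χ b := by
  calc (-120 : ℤ) = ∑ _a : G5, (-1:ℤ) := by simp [card120]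
    _ ≤ fS χ b := by
        apply Finset.sum_le_sum
        intro a _
        rcases hχ a with h | h <;> rcases hχ (b*a) with h' | h' <;> rw [h, h'] <;> norm_num

include hχ in
lemma fS_one : fS χ 1 = 120 := by
  have h : fS χ 1 = ∑ _a : G5, (1:ℤ) := by
    apply Finset.sum_congr rfl
    intro a _
    rw [one_mul]; exact sq1 hχ a
  rw [h]; simp [card120]

lemma total_nonneg (χ : G5 → ℤ) : 0 ≤ ∑ b : G5, fS χ b := by
  have h : ∑ b : G5, fS χ b = (∑ a : G5, χ a) * (∑ b : G5, χ b) := by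
    unfold fS
    rw [Finset.sum_comm]
    have h2 : ∀ a : G5, ∑ b : G5, χ a * χ (b * a) = χ a * ∑ b : G5, χ b := by
      intro a
      rw [← Finset.mul_sum]
      congr 1
      exact Fintype.sum_bijective (fun b => b * a) (Group.mulRight_bijective a) _ _ (fun b => rfl)
    rw [Finset.sum_congr rfl (fun a _ => h2 a), ← Finset.sum_mul]
  rw [h]
  exact mul_self_nonneg _
lemma pair_sum (χ : G5 → ℤ) (i j : ℕ) (b : G5) (h : i ≤ j) :
    ∑ a : G5, χ (b^i * a) * χ (b^j * a) = fS χ (b^(j-i)) := by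
  have key : ∀ a : G5, b^j * a = b^(j-i) * (b^i * a) := fun a => by
    rw [← mul_assoc, ← pow_add]
    congr 2
    omega
  calc ∑ a : G5, χ (b^i * a) * χ (b^j * a)
      = ∑ a : G5, χ (b^i * a) * χ (b^(j-i) * (b^i * a)) :=
        Finset.sum_congr rfl fun a _ => by rw [key]
    _ = fS χ (b^(j-i)) := fS_shift χ (b^i) _


include hχ in
lemma sosA (b : G5) : 0 ≤ 360 + (4 * fS χ b + 2 * fS χ (b^2)) := by
  have h0 : (0:ℤ) ≤ ∑ a : G5, (χ (b^0*a) + χ (b^1*a) + χ (b^2*a))^2 :=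
    Finset.sum_nonneg fun a _ => sq_nonneg _
  have hpt : ∀ a : G5, (χ (b^0*a) + χ (b^1*a) + χ (b^2*a))^2 = χ (b^0*a) * χ (b^0*a) + χ (b^1*a) * χ (b^1*a) + χ (b^2*a) * χ (b^2*a) + (2*(χ (b^0*a) * χ (b^1*a)) + 2*(χ (b^1*a) * χ (b^2*a)) + 2*(χ (b^0*a) * χ (b^2*a))) := fun a => by ring
  have hexp : (∑ a : G5, (χ (b^0*a) + χ (b^1*a) + χ (b^2*a))^2)
      = (∑ a : G5, χ (b^0*a) * χ (b^0*a)) + (∑ a : G5, χ (b^1*a) * χ (b^1*a)) + (∑ a : G5, χ (b^2*a) * χ (b^2*a)) + (2*(∑ a : G5, χ (b^0*a) * χ (b^1*a)) + 2*(∑ a : G5, χ (b^1*a) * χ (b^2*a)) + 2*(∑ a : G5, χ (b^0*a) * χ (b^2*a))) := by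
    rw [Finset.sum_congr rfl (fun a _ => hpt a)]
    simp only [Finset.sum_add_distrib, ← Finset.mul_sum]
  rw [hexp, pair_sum χ 0 0 b (by norm_num),
    pair_sum χ 1 1 b (by norm_num),
    pair_sum χ 2 2 b (by norm_num),
    pair_sum χ 0 1 b (by norm_num),
    pair_sum χ 1 2 b (by norm_num),
    pair_sum χ 0 2 b (by norm_num)] at h0
  norm_num [fS_one hχ] at h0
  all_goals linarith

include hχ in
lemma sosB (b : G5) : 0 ≤ 480 + 2*(3 * fS χ b + 2 * fS χ (b^2) + fS χ (b^3)) := by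
  have h0 : (0:ℤ) ≤ ∑ a : G5, (χ (b^0*a) + χ (b^1*a) + χ (b^2*a) + χ (b^3*a))^2 :=
    Finset.sum_nonneg fun a _ => sq_nonneg _
  have hpt : ∀ a : G5, (χ (b^0*a) + χ (b^1*a) + χ (b^2*a) + χ (b^3*a))^2 = χ (b^0*a) * χ (b^0*a) + χ (b^1*a) * χ (b^1*a) + χ (b^2*a) * χ (b^2*a) + χ (b^3*a) * χ (b^3*a) + (2*(χ (b^0*a) * χ (b^1*a)) + 2*(χ (b^1*a) * χ (b^2*a)) + 2*(χ (b^2*a) * χ (b^3*a)) + 2*(χ (b^0*a) * χ (b^2*a)) + 2*(χ (b^1*a) * χ (b^3*a)) + 2*(χ (b^0*a) * χ (b^3*a))) := fun a => by ring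
  have hexp : (∑ a : G5, (χ (b^0*a) + χ (b^1*a) + χ (b^2*a) + χ (b^3*a))^2)
      = (∑ a : G5, χ (b^0*a) * χ (b^0*a)) + (∑ a : G5, χ (b^1*a) * χ (b^1*a)) + (∑ a : G5, χ (b^2*a) * χ (b^2*a)) + (∑ a : G5, χ (b^3*a) * χ (b^3*a)) + (2*(∑ a : G5, χ (b^0*a) * χ (b^1*a)) + 2*(∑ a : G5, χ (b^1*a) * χ (b^2*a)) + 2*(∑ a : G5, χ (b^2*a) * χ (b^3*a)) + 2*(∑ a : G5, χ (b^0*a) * χ (b^2*a)) + 2*(∑ a : G5, χ (b^1*a) * χ (b^3*a)) + 2*(∑ a : G5, χ (b^0*a) * χ (b^3*a))) := by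
    rw [Finset.sum_congr rfl (fun a _ => hpt a)]
    simp only [Finset.sum_add_distrib, ← Finset.mul_sum]
  rw [hexp, pair_sum χ 0 0 b (by norm_num),
    pair_sum χ 1 1 b (by norm_num),
    pair_sum χ 2 2 b (by norm_num),
    pair_sum χ 3 3 b (by norm_num),
    pair_sum χ 0 1 b (by norm_num),
    pair_sum χ 1 2 b (by norm_num),
    pair_sum χ 2 3 b (by norm_num),
    pair_sum χ 0 2 b (by norm_num),
    pair_sum χ 1 3 b (by norm_num),
    pair_sum χ 0 3 b (by norm_num)] at h0
  norm_num [fS_one hχ] at h0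
  all_goals linarith

include hχ in
lemma sosC (b : G5) : 0 ≤ 600 + 2*(4 * fS χ b + 3 * fS χ (b^2) + 2 * fS χ (b^3) + fS χ (b^4)) := by
  have h0 : (0:ℤ) ≤ ∑ a : G5, (χ (b^0*a) + χ (b^1*a) + χ (b^2*a) + χ (b^3*a) + χ (b^4*a))^2 :=
    Finset.sum_nonneg fun a _ => sq_nonneg _
  have hpt : ∀ a : G5, (χ (b^0*a) + χ (b^1*a) + χ (b^2*a) + χ (b^3*a) + χ (b^4*a))^2 = χ (b^0*a) * χ (b^0*a) + χ (b^1*a) * χ (b^1*a) + χ (b^2*a) * χ (b^2*a) + χ (b^3*a) * χ (b^3*a) + χ (b^4*a) * χ (b^4*a) + (2*(χ (b^0*a) * χ (b^1*a)) + 2*(χ (b^1*a) * χ (b^2*a)) + 2*(χ (b^2*a) * χ (b^3*a)) + 2*(χ (b^3*a) * χ (b^4*a)) + 2*(χ (b^0*a) * χ (b^2*a)) + 2*(χ (b^1*a) * χ (b^3*a)) + 2*(χ (b^2*a) * χ (b^4*a)) + 2*(χ (b^0*a) * χ (b^3*a)) + 2*(χ (b^1*a) * χ (b^4*a)) + 2*(χ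 (b^0*a) * χ (b^4*a))) := fun a => by ring
  have hexp : (∑ a : G5, (χ (b^0*a) + χ (b^1*a) + χ (b^2*a) + χ (b^3*a) + χ (b^4*a))^2)
      = (∑ a : G5, χ (b^0*a) * χ (b^0*a)) + (∑ a : G5, χ (b^1*a) * χ (b^1*a)) + (∑ a : G5, χ (b^2*a) * χ (b^2*a)) + (∑ a : G5, χ (b^3*a) * χ (b^3*a)) + (∑ a : G5, χ (b^4*a) * χ (b^4*a)) + (2*(∑ a : G5, χ (b^0*a) * χ (b^1*a)) + 2*(∑ a : G5, χ (b^1*a) * χ (b^2*a)) + 2*(∑ a : G5, χ (b^2*a) * χ (b^3*a)) + 2*(∑ a : G5, χ (b^3*a) * χ (b^4*a)) + 2*(∑ a : G5, χ (b^0*a) * χ (b^2*a)) + 2*(∑ a : G5, χ (b^1*a) * χ (b^3*a)) + 2*(∑ a : G5, χ (b^2*a) * χ (b^4*a)) + 2*(∑ a : G5, χ (b^0*a) * χ (b^3*a)) + 2*(∑ a : G5, χ (b^1*a) * χ (b^4*a)) + 2*(∑ a : G5, χ (b^0*a) * χ (b^4*a))) := by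
    rw [Finset.sum_congr rfl (fun a _ => hpt a)]
    simp only [Finset.sum_add_distrib, ← Finset.mul_sum]
  rw [hexp, pair_sum χ 0 0 b (by norm_num),
    pair_sum χ 1 1 b (by norm_num),
    pair_sum χ 2 2 b (by norm_num),
    pair_sum χ 3 3 b (by norm_num),
    pair_sum χ 4 4 b (by norm_num),
    pair_sum χ 0 1 b (by norm_num),
    pair_sum χ 1 2 b (by norm_num),
    pair_sum χ 2 3 b (by norm_num),
    pair_sum χ 3 4 b (by norm_num),
    pair_sum χ 0 2 b (by norm_num),
    pair_sum χ 1 3 b (by norm_num),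
    pair_sum χ 2 4 b (by norm_num),
    pair_sum χ 0 3 b (by norm_num),
    pair_sum χ 1 4 b (by norm_num),
    pair_sum χ 0 4 b (by norm_num)] at h0
  norm_num [fS_one hχ] at h0
  all_goals linarith

def Bf : Finset G5 := univ.filter (fun b => ¬ b^2 = 1)
def If : Finset G5 := univ.filter (fun b => b^2 = 1)
def Jf : Finset G5 := If.filter (fun b => ¬ b = 1)
def Tr : Finset G5 := Jf.filter (fun b => Equiv.Perm.sign b = -1)
def Dd : Finset G5 := Jf.filter (fun b => ¬ Equiv.Perm.sign b = -1)
def B3 : Finset G5 := Bf.filter (fun b => b^3 = 1)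
def R1 : Finset G5 := Bf.filter (fun b => ¬ b^3 = 1)
def B4 : Finset G5 := R1.filter (fun b => b^4 = 1)
def R2 : Finset G5 := R1.filter (fun b => ¬ b^4 = 1)
def B5 : Finset G5 := R2.filter (fun b => b^5 = 1)
def B32 : Finset G5 := R2.filter (fun b => ¬ b^5 = 1)

lemma dB : Bf.card = 94 := by decide
lemma dB3 : B3.card = 20 := by decide
lemma dB5 : B5.card = 24 := by decide
lemma dB32 : B32.card = 20 := by decide
lemma dTr : Tr.card = 10 := by decide
lemma dI1 : If.filter (fun b => b = 1) = {1} := by decide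
lemma dB4D : ∀ b ∈ B4, b^2 ∈ Dd := by decide
lemma dfib : ∀ d ∈ Dd, (B4.filter (fun b => b^2 = d)).card = 2 := by decide

lemma pow_red (b : G5) {n : ℕ} (k m : ℕ) (h : b^n = 1) (hm : k = n + m) : b^k = b^m := by
  rw [hm, pow_add, h, one_mul]

lemma memB3 {b : G5} : b ∈ B3 ↔ ¬ b^2 = 1 ∧ b^3 = 1 := by
  simp [B3, Bf, mem_filter]

lemma memB5 {b : G5} : b ∈ B5 ↔ ¬ b^2 = 1 ∧ ¬ b^3 = 1 ∧ ¬ b^4 = 1 ∧ b^5 = 1 := by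
  simp [B5, R2, R1, Bf, mem_filter, and_assoc]

lemma bne_one {b : G5} (h : ¬ b^2 = 1) : ¬ b = 1 := fun h1 => h (by rw [h1, one_pow])

lemma sumB3 (χ : G5 → ℤ) : ∑ b ∈ B3, fS χ (b^2) = ∑ b ∈ B3, fS χ b := by
  have key : ∀ b ∈ B3, b^2 ∈ B3 ∧ (b^2)^2 = b := by
    intro b hb
    obtain ⟨h2, h3⟩ := memB3.1 hb
    have hsq : (b^2)^2 = b := by
      rw [← pow_mul, pow_red b 4 1 h3 rfl, pow_one]
    refine ⟨memB3.2 ⟨?_, ?_⟩, hsq⟩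
    · rw [hsq]; exact bne_one h2
    · rw [← pow_mul, pow_red b 6 3 h3 rfl, h3]
  exact Finset.sum_nbij' (fun b => b^2) (fun b => b^2)
    (fun b hb => (key b hb).1) (fun b hb => (key b hb).1)
    (fun b hb => (key b hb).2) (fun b hb => (key b hb).2)
    (fun b _ => rfl)

lemma sumB5 (χ : G5 → ℤ) : ∑ b ∈ B5, fS χ (b^2) = ∑ b ∈ B5, fS χ b := by
  have key : ∀ b ∈ B5, b^2 ∈ B5 ∧ b^3 ∈ B5 ∧ (b^2)^3 = b ∧ (b^3)^2 = b := by
    intro b hb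
    obtain ⟨h2, h3, h4, h5⟩ := memB5.1 hb
    have e6 : b^6 = b := by rw [pow_red b 6 1 h5 rfl, pow_one]
    have e8 : b^8 = b^3 := pow_red b 8 3 h5 rfl
    have e9 : b^9 = b^4 := pow_red b 9 4 h5 rfl
    have e10 : b^10 = 1 := by rw [pow_red b 10 5 h5 rfl, h5]
    have e12 : b^12 = b^2 := by rw [pow_red b 12 7 h5 rfl, pow_red b 7 2 h5 rfl]
    have e15 : b^15 = 1 := by rw [pow_red b 15 10 h5 rfl, e10]
    refine ⟨memB5.2 ⟨?_, ?_, ?_, ?_⟩, memB5.2 ⟨?_, ?_, ?_, ?_⟩, ?_, ?_⟩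
    · rw [← pow_mul]; exact h4
    · rw [← pow_mul]; rw [e6]; exact bne_one h2
    · rw [← pow_mul]; rw [e8]; exact h3
    · rw [← pow_mul]; rw [e10]
    · rw [← pow_mul]; rw [e6]; exact bne_one h2
    · rw [← pow_mul]; rw [e9]; exact h4
    · rw [← pow_mul]; rw [e12]; exact h2
    · rw [← pow_mul]; rw [e15]
    · rw [← pow_mul]; exact e6
    · rw [← pow_mul]; exact e6
  exact Finset.sum_nbij' (fun b => b^2) (fun b => b^3)
    (fun b hb => (key b hb).1) (fun b hb => (key b hb).2.1)
    (fun b hb => (key b hb).2.2.1) (fun b hb => (key b hb).2.2.2)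
    (fun b _ => rfl)

lemma sumB4 (χ : G5 → ℤ) : ∑ b ∈ B4, fS χ (b^2) = 2 * ∑ d ∈ Dd, fS χ d := by
  rw [← Finset.sum_fiberwise_of_maps_to dB4D (fun b => fS χ (b^2)), Finset.mul_sum]
  apply Finset.sum_congr rfl
  intro d hd
  have h1 : ∀ b ∈ B4.filter (fun b => b^2 = d), fS χ (b^2) = fS χ d := by
    intro b hb; rw [(Finset.mem_filter.1 hb).2]
  rw [Finset.sum_congr rfl h1, Finset.sum_const, dfib d hd, nsmul_eq_mul]
  norm_num


include hχ in
lemma bigbound : (4320:ℤ) ≤ ∑ b ∈ Bf, (120 + 2 * fS χ b + fS χ (b^2)) := by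
  have hsplit : ∑ b ∈ Bf, (120 + 2 * fS χ b + fS χ (b^2))
      = 120 * 94 + 2 * (∑ b ∈ Bf, fS χ b) + ∑ b ∈ Bf, fS χ (b^2) := by
    rw [Finset.sum_add_distrib, Finset.sum_add_distrib, Finset.sum_const, dB, ← Finset.mul_sum]
    norm_num
  have hIB : ∑ b ∈ If, fS χ b + ∑ b ∈ Bf, fS χ b = ∑ b : G5, fS χ b :=
    Finset.sum_filter_add_sum_filter_not univ (fun b => b^2 = 1) (fS χ)
  have hJ : ∑ b ∈ Jf, fS χ b = ∑ b ∈ Tr, fS χ b + ∑ b ∈ Dd, fS χ b :=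
    (Finset.sum_filter_add_sum_filter_not Jf (fun b => Equiv.Perm.sign b = -1) (fS χ)).symm
  have hI2 : ∑ b ∈ If, fS χ b = fS χ 1 + ∑ b ∈ Jf, fS χ b := by
    rw [← Finset.sum_filter_add_sum_filter_not If (fun b => b = 1) (fS χ)]
    congr 1
    rw [dI1, Finset.sum_singleton]
  have hS2a : ∑ b ∈ B3, fS χ (b^2) + ∑ b ∈ R1, fS χ (b^2) = ∑ b ∈ Bf, fS χ (b^2) :=
    Finset.sum_filter_add_sum_filter_not Bf (fun b => b^3 = 1) _
  have hS2b : ∑ b ∈ B4, fS χ (b^2) + ∑ b ∈ R2, fS χ (b^2) = ∑ b ∈ R1, fS χ (b^2) :=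
    Finset.sum_filter_add_sum_filter_not R1 (fun b => b^4 = 1) _
  have hS2c : ∑ b ∈ B5, fS χ (b^2) + ∑ b ∈ B32, fS χ (b^2) = ∑ b ∈ R2, fS χ (b^2) :=
    Finset.sum_filter_add_sum_filter_not R2 (fun b => b^5 = 1) _
  have htot : 0 ≤ ∑ b : G5, fS χ b := total_nonneg χ
  have hTr : ∑ b ∈ Tr, fS χ b ≤ 1200 := by
    calc ∑ b ∈ Tr, fS χ b ≤ ∑ _b ∈ Tr, (120:ℤ) := Finset.sum_le_sum (fun b _ => fS_le hχ b)
      _ = 1200 := by rw [Finset.sum_const, dTr]; norm_num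
  have hB32 : (-2400:ℤ) ≤ ∑ b ∈ B32, fS χ (b^2) := by
    calc (-2400:ℤ) = ∑ _b ∈ B32, (-120:ℤ) := by rw [Finset.sum_const, dB32]; norm_num
      _ ≤ ∑ b ∈ B32, fS χ (b^2) := Finset.sum_le_sum (fun b _ => fS_ge hχ (b^2))
  have hB3 : (-1200:ℤ) ≤ ∑ b ∈ B3, fS χ b := by
    have h0 : (0:ℤ) ≤ ∑ b ∈ B3, (360 + 4 * fS χ b + 2 * fS χ (b^2)) :=
      Finset.sum_nonneg (fun b _ => by have := sosA hχ b; linarith)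
    have hexp : ∑ b ∈ B3, (360 + 4 * fS χ b + 2 * fS χ (b^2))
        = 360 * 20 + 4 * (∑ b ∈ B3, fS χ b) + 2 * (∑ b ∈ B3, fS χ (b^2)) := by
      rw [Finset.sum_add_distrib, Finset.sum_add_distrib, Finset.sum_const, dB3,
        ← Finset.mul_sum, ← Finset.mul_sum]
      norm_num
    rw [hexp, sumB3] at h0
    linarith
  have hB5 : (-720:ℤ) ≤ ∑ b ∈ B5, fS χ b := by
    have h1 : ∀ b ∈ B5, (0:ℤ) ≤ 600 + 10 * fS χ b + 10 * fS χ (b^2) := by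
      intro b hb
      obtain ⟨h2, h3, h4, h5⟩ := memB5.1 hb
      have hc : fS χ (b^3) = fS χ (b^2) := by
        have he : (b^3) = (b^2)⁻¹ := by
          apply eq_inv_of_mul_eq_one_left
          rw [← pow_add]
          norm_num [h5]
        rw [he, fS_inv]
      have hd : fS χ (b^4) = fS χ b := by
        have he : (b^4) = b⁻¹ := by
          apply eq_inv_of_mul_eq_one_left
          rw [← pow_succ]
          norm_num [h5]
        rw [he, fS_inv]
      have hs := sosC hχ b
      rw [hc, hd] at hs
      linarith
    have h0 : (0:ℤ) ≤ ∑ b ∈ B5, (600 + 10 * fS χ b + 10 * fS χ (b^2)) :=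
      Finset.sum_nonneg h1
    have hexp : ∑ b ∈ B5, (600 + 10 * fS χ b + 10 * fS χ (b^2))
        = 600 * 24 + 10 * (∑ b ∈ B5, fS χ b) + 10 * (∑ b ∈ B5, fS χ (b^2)) := by
      rw [Finset.sum_add_distrib, Finset.sum_add_distrib, Finset.sum_const, dB5,
        ← Finset.mul_sum, ← Finset.mul_sum]
      norm_num
    rw [hexp, sumB5] at h0
    linarith
  have hB3sq : (-1200:ℤ) ≤ ∑ b ∈ B3, fS χ (b^2) := by rw [sumB3]; exact hB3
  have hB5sq : (-720:ℤ) ≤ ∑ b ∈ B5, fS χ (b^2) := by rw [sumB5]; exact hB5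
  have hB4 := sumB4 χ
  have hone := fS_one hχ
  linarith

def Pset (χ : G5 → ℤ) : Finset ((_ : G5) × G5) :=
  Bf.sigma (fun b => univ.filter (fun a => χ a = χ (b*a) ∧ χ (b*a) = χ (b^2*a)))

def Phi : (_ : G5) × G5 → Finset G5 := fun p => {p.2, p.1 * p.2, p.1^2 * p.2}

include hχ in
lemma cardP : 1080 ≤ (Pset χ).card := by
  have hcard : (Pset χ).card
      = ∑ b ∈ Bf, (univ.filter (fun a => χ a = χ (b*a) ∧ χ (b*a) = χ (b^2*a))).card :=
    Finset.card_sigma _ _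
  have key : ∀ b : G5,
      ((univ.filter (fun a => χ a = χ (b*a) ∧ χ (b*a) = χ (b^2*a))).card : ℤ) * 4
        = 120 + 2 * fS χ b + fS χ (b^2) := by
    intro b
    have hpt : ∀ a : G5, (if (χ a = χ (b*a) ∧ χ (b*a) = χ (b^2*a)) then (4:ℤ) else 0)
        = 1 + χ a * χ (b*a) + χ (b*a) * χ (b^2*a) + χ a * χ (b^2*a) := by
      intro a
      rcases hχ a with h1|h1 <;> rcases hχ (b*a) with h2|h2 <;> rcases hχ (b^2*a) with h3|h3 <;>
        rw [h1, h2, h3] <;> norm_num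
    calc ((univ.filter (fun a => χ a = χ (b*a) ∧ χ (b*a) = χ (b^2*a))).card : ℤ) * 4
        = ∑ _a ∈ univ.filter (fun a => χ a = χ (b*a) ∧ χ (b*a) = χ (b^2*a)), (4:ℤ) := by
          rw [Finset.sum_const, nsmul_eq_mul]
      _ = ∑ a : G5, (if (χ a = χ (b*a) ∧ χ (b*a) = χ (b^2*a)) then (4:ℤ) else 0) :=
          Finset.sum_filter _ _
      _ = ∑ a : G5, (1 + χ a * χ (b*a) + χ (b*a) * χ (b^2*a) + χ a * χ (b^2*a)) :=
          Finset.sum_congr rfl (fun a _ => hpt a)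
      _ = 120 + 2 * fS χ b + fS χ (b^2) := by
          rw [Finset.sum_add_distrib, Finset.sum_add_distrib, Finset.sum_add_distrib,
            Finset.sum_const]
          have e2 : ∑ a : G5, χ (b*a) * χ (b^2*a) = fS χ b := by
            have hp : ∀ a : G5, χ (b*a) * χ (b^2*a) = χ (b*a) * χ (b*(b*a)) := by
              intro a; rw [pow_two, mul_assoc]
            rw [Finset.sum_congr rfl (fun a _ => hp a)]
            exact fS_shift χ b b
          have e1 : ∑ a : G5, χ a * χ (b*a) = fS χ b := rfl
          have e3 : ∑ a : G5, χ a * χ (b^2*a) = fS χ (b^2) := rfl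
          rw [e1, e2, e3]
          simp [Finset.card_univ, card120]
          ring
  have h4 : 4 * ((Pset χ).card : ℤ) = ∑ b ∈ Bf, (120 + 2 * fS χ b + fS χ (b^2)) := by
    rw [hcard]
    push_cast
    rw [Finset.mul_sum]
    exact Finset.sum_congr rfl (fun b _ => by rw [← key b]; ring)
  have hb := bigbound hχ
  have h5 : (1080:ℤ) ≤ ((Pset χ).card : ℤ) := by linarith
  exact_mod_cast h5

lemma fiber9 (χ : G5 → ℤ) :
    ∀ s ∈ (Pset χ).image Phi, ((Pset χ).filter (fun p => Phi p = s)).card ≤ 9 := by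
  intro s hs
  obtain ⟨p0, _, rfl⟩ := Finset.mem_image.1 hs
  have hc : (Phi p0).card ≤ 3 := by
    calc (Phi p0).card ≤ ({p0.1 * p0.2, p0.1^2 * p0.2} : Finset G5).card + 1 :=
          Finset.card_insert_le _ _
      _ ≤ (({p0.1^2 * p0.2} : Finset G5).card + 1) + 1 := by
          exact Nat.add_le_add_right (Finset.card_insert_le _ _) 1
      _ = 3 := by rw [Finset.card_singleton]
  calc ((Pset χ).filter (fun p => Phi p = Phi p0)).card
      ≤ ((Phi p0) ×ˢ (Phi p0)).card := by
        apply Finset.card_le_card_of_injOn (fun p => (p.2, p.1 * p.2))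
        · intro p hp
          have heq := (Finset.mem_filter.1 hp).2
          rw [Finset.mem_coe, Finset.mem_product, ← heq]
          constructor
          · exact Finset.mem_insert_self _ _
          · exact Finset.mem_insert_of_mem (Finset.mem_insert_self _ _)
        · intro p _ q _ h
          have h1 : p.2 = q.2 := congrArg Prod.fst h
          have h2 : p.1 * p.2 = q.1 * q.2 := congrArg Prod.snd h
          rw [h1] at h2
          exact Sigma.ext (mul_right_cancel h2) (heq_of_eq h1)
    _ = (Phi p0).card * (Phi p0).card := Finset.card_product _ _
    _ ≤ 9 := Nat.mul_le_mul hc hc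

omit hχ in
lemma image_sub : ((Pset χ).image Phi : Set (Finset G5)) ⊆
    {s : Finset G5 | IsThreeAP s ∧ ∀ x ∈ s, ∀ y ∈ s, χ x = χ y} := by
  intro s hs
  simp only [Finset.coe_image, Set.mem_image, Finset.mem_coe] at hs
  obtain ⟨p, hp, rfl⟩ := hs
  obtain ⟨hb, ha⟩ := Finset.mem_sigma.1 hp
  have hb2 : ¬ p.1^2 = 1 := (Finset.mem_filter.1 hb).2
  obtain ⟨h1, h2⟩ := (Finset.mem_filter.1 ha).2
  have hbne : p.1 ≠ 1 := bne_one hb2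
  have d1 : p.2 ≠ p.1 * p.2 := fun h => hbne (mul_eq_right.1 h.symm)
  have d2 : p.2 ≠ p.1^2 * p.2 := fun h => hb2 (mul_eq_right.1 h.symm)
  have d3 : p.1 * p.2 ≠ p.1^2 * p.2 := by
    intro h
    apply d1
    apply mul_left_cancel (a := p.1)
    rw [← mul_assoc, ← pow_two]
    exact h
  simp only [Set.mem_setOf_eq, IsThreeAP, Phi]
  refine ⟨⟨?_, p.2, p.1, rfl⟩, ?_⟩
  · rw [Finset.card_insert_of_notMem (by simp [d1, d2]),
      Finset.card_insert_of_notMem (by simp [d3]), Finset.card_singleton]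
  · intro x hx y hy
    simp only [Finset.mem_insert, Finset.mem_singleton] at hx hy
    rcases hx with rfl|rfl|rfl <;> rcases hy with rfl|rfl|rfl <;> linarith

end APaux

theorem RThree_symm_5_lower_bound :
    (∀ χ : Equiv.Perm (Fin 5) → ℤ, (∀ g, χ g = 1 ∨ χ g = -1) →
      90 ≤ monoAPCount (Equiv.Perm (Fin 5)) χ) ∧
    90 ≤ RThree (Equiv.Perm (Fin 5)) := by
  have key : ∀ χ : Equiv.Perm (Fin 5) → ℤ, (∀ g, χ g = 1 ∨ χ g = -1) →
      90 ≤ monoAPCount (Equiv.Perm (Fin 5)) χ := by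
    intro χ hχ
    have hP := APaux.cardP hχ
    have h9 : (APaux.Pset χ).card ≤ 9 * ((APaux.Pset χ).image APaux.Phi).card :=
      Finset.card_le_mul_card_image _ 9 (APaux.fiber9 χ)
    have himgcard : 120 ≤ ((APaux.Pset χ).image APaux.Phi).card := by omega
    calc (90:ℕ) ≤ 120 := by norm_num
      _ ≤ ((APaux.Pset χ).image APaux.Phi).card := himgcard
      _ = (((APaux.Pset χ).image APaux.Phi : Finset (Finset G5)) : Set (Finset G5)).ncard :=
          (Set.ncard_coe_finset _).symm
      _ ≤ monoAPCount (Equiv.Perm (Fin 5)) χ :=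
          Set.ncard_le_ncard (APaux.image_sub (χ := χ)) (Set.toFinite _)
  refine ⟨key, ?_⟩
  apply le_csInf
  · exact ⟨monoAPCount (Equiv.Perm (Fin 5)) (fun _ => 1), ⟨fun _ => 1, fun g => Or.inl rfl, rfl⟩⟩
  · rintro m ⟨χ, hχ, rfl⟩
    exact key χ hχ
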